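/- For CCS processes, if there is a hereditary history preserving bisimulation between the configuration-structure encodings of P₁ and P₂, then for every parallel context Q there is a hereditary history preserving bisimulation between the encodings of P₁|Q and P₂|Q, where the encoding of P|Q is the restricted relabelled product of the encodings of P and Q. -/

import Mathlib

/-! Configuration structures (Winskel / van Glabbeek). -/

variable {E E₁ E₂ E₃ L : Type*}

/-- Finiteness axiom of configuration structures. -/
def Finiteness (C : Set (Set E)) : Prop :=
  ∀ x ∈ C, ∀ e ∈ x, ∃ z ∈ C, z.Finite ∧ e ∈ z ∧ z ⊆ x

/-- Coincidence freeness axiom. -/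
def CoincidenceFree (C : Set (Set E)) : Prop :=
  ∀ x ∈ C, ∀ e ∈ x, ∀ e' ∈ x, e ≠ e' → ∃ z ∈ C, z ⊆ x ∧ (e ∈ z ↔ e' ∉ z)

/-- Finite completeness: a family bounded above by a finite configuration has its union in C. -/
def FinComplete (C : Set (Set E)) : Prop :=
  ∀ X ⊆ C, (∃ y ∈ C, y.Finite ∧ ∀ x ∈ X, x ⊆ y) → ⋃₀ X ∈ C

/-- Stability axiom. -/
def Stability (C : Set (Set E)) : Prop :=
  ∀ x ∈ C, ∀ y ∈ C, x ∪ y ∈ C → x ∩ y ∈ C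

/-- `C` is (the configuration family of) a configuration structure. -/
def IsCS (C : Set (Set E)) : Prop :=
  Finiteness C ∧ CoincidenceFree C ∧ FinComplete C ∧ Stability C

/-- Causality order on a configuration `x`: `e₁ ≤ₓ e₂` iff every configuration
`z ⊆ x` containing `e₂` also contains `e₁`. -/
def causeLe (C : Set (Set E)) (x : Set E) (e₁ e₂ : E) : Prop :=
  ∀ z ∈ C, z ⊆ x → e₂ ∈ z → e₁ ∈ z

/-! Hereditary history preserving bisimulation. -/

/-- `f ⊆ E₁ × E₂` is (the graph of) a bijection between `x₁` and `x₂`. -/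
def IsBij (f : Set (E₁ × E₂)) (x₁ : Set E₁) (x₂ : Set E₂) : Prop :=
  (∀ p ∈ f, p.1 ∈ x₁ ∧ p.2 ∈ x₂) ∧
  (∀ e₁ ∈ x₁, ∃! e₂ : E₂, (e₁, e₂) ∈ f) ∧
  (∀ e₂ ∈ x₂, ∃! e₁ : E₁, (e₁, e₂) ∈ f)

/-- `f` is a label- and order-preserving bijection between configurations
`x₁` of `C₁` and `x₂` of `C₂`. -/
def LabOrdIso (C₁ : Set (Set E₁)) (C₂ : Set (Set E₂)) (ℓ₁ : E₁ → L) (ℓ₂ : E₂ → L)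
    (x₁ : Set E₁) (x₂ : Set E₂) (f : Set (E₁ × E₂)) : Prop :=
  IsBij f x₁ x₂ ∧
  (∀ p ∈ f, ℓ₁ p.1 = ℓ₂ p.2) ∧
  (∀ p ∈ f, ∀ q ∈ f, (causeLe C₁ x₁ p.1 q.1 ↔ causeLe C₂ x₂ p.2 q.2))

/-- Restriction of a mapping `f` to pairs whose first component is in `x₁`. -/
def restrMap (f : Set (E₁ × E₂)) (x₁ : Set E₁) : Set (E₁ × E₂) :=
  {p ∈ f | p.1 ∈ x₁}

/-- `R` is a hereditary history preserving bisimulation between the labelled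
configuration structures `(C₁, ℓ₁)` and `(C₂, ℓ₂)`. -/
def IsHHPB (C₁ : Set (Set E₁)) (C₂ : Set (Set E₂)) (ℓ₁ : E₁ → L) (ℓ₂ : E₂ → L)
    (R : Set E₁ → Set E₂ → Set (E₁ × E₂) → Prop) : Prop :=
  R ∅ ∅ ∅ ∧
  ∀ x₁ x₂ f, R x₁ x₂ f →
    x₁ ∈ C₁ ∧ x₂ ∈ C₂ ∧ LabOrdIso C₁ C₂ ℓ₁ ℓ₂ x₁ x₂ f ∧
    -- forward, left to right
    (∀ e₁, e₁ ∉ x₁ → insert e₁ x₁ ∈ C₁ →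
      ∃ e₂ f', e₂ ∉ x₂ ∧ insert e₂ x₂ ∈ C₂ ∧
        R (insert e₁ x₁) (insert e₂ x₂) f' ∧ f = restrMap f' x₁) ∧
    -- forward, right to left
    (∀ e₂, e₂ ∉ x₂ → insert e₂ x₂ ∈ C₂ →
      ∃ e₁ f', e₁ ∉ x₁ ∧ insert e₁ x₁ ∈ C₁ ∧
        R (insert e₁ x₁) (insert e₂ x₂) f' ∧ f = restrMap f' x₁) ∧
    -- backward, left to right
    (∀ e₁ ∈ x₁, x₁ \ {e₁} ∈ C₁ →
      ∃ e₂ ∈ x₂, x₂ \ {e₂} ∈ C₂ ∧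
        R (x₁ \ {e₁}) (x₂ \ {e₂}) (restrMap f (x₁ \ {e₁}))) ∧
    -- backward, right to left
    (∀ e₂ ∈ x₂, x₂ \ {e₂} ∈ C₂ →
      ∃ e₁ ∈ x₁, x₁ \ {e₁} ∈ C₁ ∧
        R (x₁ \ {e₁}) (x₂ \ {e₂}) (restrMap f (x₁ \ {e₁})))

/-! CCS syntax (with a general binary sum) and contexts. -/

/-- Actions: input, output, or silent action `τ`. -/
inductive Act (N : Type) : Type
  | inp (a : N)
  | out (a : N)
  | tau
deriving DecidableEq

/-- The dual of an action. -/
def Act.dual {N : Type} : Act N → Act N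
  | .inp a => .out a
  | .out a => .inp a
  | .tau => .tau

/-- `α` mentions the name `a`. -/
def Act.mentions {N : Type} (a : N) : Act N → Prop
  | .inp b => b = a
  | .out b => b = a
  | .tau => False

/-- CCS processes. -/
inductive CCS (N : Type) : Type
  | nil
  | act (α : Act N) (P : CCS N)
  | sum (P Q : CCS N)
  | par (P Q : CCS N)
  | res (a : N) (P : CCS N)
deriving DecidableEq

/-- Free names of a CCS process. -/
def CCS.fn {N : Type} : CCS N → Set N
  | .nil => ∅
  | .act α P => {a | α.mentions a} ∪ P.fn
  | .sum P Q => P.fn ∪ Q.fn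
  | .par P Q => P.fn ∪ Q.fn
  | .res a P => P.fn \ {a}

/-- CCS contexts: `C ::= [·] | α.C | C+P | C|P | (a)C`. -/
inductive Ctx (N : Type) : Type
  | hole
  | act (α : Act N) (C : Ctx N)
  | sum (C : Ctx N) (P : CCS N)
  | par (C : Ctx N) (P : CCS N)
  | res (a : N) (C : Ctx N)

/-- Instantiating a context with a process. -/
def Ctx.fill {N : Type} : Ctx N → CCS N → CCS N
  | .hole, P => P
  | .act α C, P => .act α (C.fill P)
  | .sum C Q, P => .sum (C.fill P) Q
  | .par C Q, P => .par (C.fill P) Q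
  | .res a C, P => .res a (C.fill P)

/-! Labelled configuration structures (bundled) and the encoding of CCS. -/

/-- A labelled configuration structure. -/
structure LCS (L : Type) where
  E : Type
  C : Set (Set E)
  lab : E → L

/-- Encoding of `0`. -/
def lcsNil {L : Type} : LCS L :=
  ⟨Empty, {∅}, fun e => e.elim⟩

/-- Prefix `α.A`: a fresh minimal event (`none`) labelled `α` below all
configurations. -/
def lcsPrefix {L : Type} (α : L) (A : LCS L) : LCS L :=
  ⟨Option A.E, {∅} ∪ {y | ∃ x ∈ A.C, y = insert none (Option.some '' x)},
   fun e => e.elim α A.lab⟩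

/-- Coproduct (encoding the sum). -/
def lcsSum {L : Type} (A B : LCS L) : LCS L :=
  ⟨A.E ⊕ B.E,
   {y | (∃ x ∈ A.C, y = Sum.inl '' x) ∨ (∃ x ∈ B.C, y = Sum.inr '' x)},
   Sum.elim A.lab B.lab⟩

/-- Restriction of the name `a`: keep only configurations whose events do not
mention `a`. -/
def lcsRes {N : Type} (a : N) (A : LCS (Act N)) : LCS (Act N) :=
  ⟨A.E, {x ∈ A.C | ∀ e ∈ x, ¬ (A.lab e).mentions a}, A.lab⟩

/-- Synchronisation algebra for the parallel composition: `none` is the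
label `0` of removed events. -/
def syncLab {N : Type} [DecidableEq N] :
    Option (Act N) → Option (Act N) → Option (Act N)
  | some (.inp a), some (.out b) => if a = b then some .tau else none
  | some (.out a), some (.inp b) => if a = b then some .tau else none
  | some α, none => some α
  | none, some β => some β
  | some _, some _ => none
  | none, none => none

/-- First projection of a candidate configuration of a product. -/
def pproj₁ {E₁ E₂ : Type} (x : Set (Option E₁ × Option E₂)) : Set E₁ :=
  {a | ∃ e ∈ x, e.1 = some a}

/-- Second projection of a candidate configuration of a product. -/
def pproj₂ {E₁ E₂ : Type} (x : Set (Option E₁ × Option E₂)) : Set E₂ :=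
  {a | ∃ e ∈ x, e.2 = some a}

/-- Local injectivity of the first projection. -/
def pLocInj₁ {E₁ E₂ : Type} (x : Set (Option E₁ × Option E₂)) : Prop :=
  ∀ e ∈ x, ∀ e' ∈ x, ∀ a : E₁, e.1 = some a → e'.1 = some a → e = e'

/-- Local injectivity of the second projection. -/
def pLocInj₂ {E₁ E₂ : Type} (x : Set (Option E₁ × Option E₂)) : Prop :=
  ∀ e ∈ x, ∀ e' ∈ x, ∀ a : E₂, e.2 = some a → e'.2 = some a → e = e'

/-- Basic requirements on configurations of the parallel composition: all
events have a defined (non-`0`) label, projections are configurations, and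
they are locally injective. -/
def parPre {N : Type} [DecidableEq N] (A B : LCS (Act N))
    (x : Set (Option A.E × Option B.E)) : Prop :=
  (∀ e ∈ x, syncLab (e.1.map A.lab) (e.2.map B.lab) ≠ none) ∧
  pproj₁ x ∈ A.C ∧ pproj₂ x ∈ B.C ∧ pLocInj₁ x ∧ pLocInj₂ x

/-- Parallel composition of labelled configuration structures: restricted
relabelled product. -/
def lcsPar {N : Type} [DecidableEq N] (A B : LCS (Act N)) : LCS (Act N) :=
  ⟨Option A.E × Option B.E,
   {x | parPre A B x ∧
        (∀ e ∈ x, ∃ z, z ⊆ x ∧ parPre A B z ∧ z.Finite ∧ e ∈ z) ∧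
        (∀ e ∈ x, ∀ e' ∈ x, e ≠ e' → ∃ z, z ⊆ x ∧ parPre A B z ∧ (e ∈ z ↔ e' ∉ z))},
   fun e => (syncLab (e.1.map A.lab) (e.2.map B.lab)).getD .tau⟩

/-- The compositional encoding of CCS into labelled configuration structures. -/
def enc {N : Type} [DecidableEq N] : CCS N → LCS (Act N)
  | .nil => lcsNil
  | .act α P => lcsPrefix α (enc P)
  | .sum P Q => lcsSum (enc P) (enc Q)
  | .par P Q => lcsPar (enc P) (enc Q)
  | .res a P => lcsRes a (enc P)


open Relation

instance myOptFinite (α : Type) [Finite α] : Finite (Option α) :=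
  Finite.of_equiv _ (Equiv.optionEquivSumPUnit.{0,0} α).symm

variable {E E₁ E₂ L : Type*}

theorem causeLe_refl (C : Set (Set E)) (x : Set E) (e : E) : causeLe C x e e :=
  fun _ _ _ h => h

theorem causeLe_trans {C : Set (Set E)} {x : Set E} {a b c : E}
    (h1 : causeLe C x a b) (h2 : causeLe C x b c) : causeLe C x a c :=
  fun z hz hzx hc => h1 z hz hzx (h2 z hz hzx hc)

/-- Down-closed subset of `x` w.r.t. the causality order of `C` on `x`. -/
def DCl (C : Set (Set E)) (x S : Set E) : Prop :=
  ∀ a ∈ S, ∀ b ∈ x, causeLe C x b a → b ∈ S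

/-- Down-closed subsets of configurations are configurations. -/
def DCP (C : Set (Set E)) : Prop :=
  ∀ x ∈ C, ∀ S ⊆ x, DCl C x S → S ∈ C

/- pproj lemmas -/
section pproj
variable {A B : Type}

theorem pproj₁_empty : pproj₁ (∅ : Set (Option A × Option B)) = ∅ := by
  ext a; simp [pproj₁]

theorem pproj₂_empty : pproj₂ (∅ : Set (Option A × Option B)) = ∅ := by
  ext a; simp [pproj₂]

theorem mem_pproj₁ {x : Set (Option A × Option B)} {e} (he : e ∈ x) {a} (ha : e.1 = some a) :
    a ∈ pproj₁ x := ⟨e, he, ha⟩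

theorem mem_pproj₂ {x : Set (Option A × Option B)} {e} (he : e ∈ x) {b} (hb : e.2 = some b) :
    b ∈ pproj₂ x := ⟨e, he, hb⟩

theorem pproj₁_insert_some {x : Set (Option A × Option B)} {e} {a} (ha : e.1 = some a) :
    pproj₁ (insert e x) = insert a (pproj₁ x) := by
  ext c; constructor
  · rintro ⟨r, hr, hrc⟩
    rcases hr with rfl | hr
    · left; rw [ha] at hrc; exact (Option.some_inj.mp hrc).symm
    · exact Or.inr ⟨r, hr, hrc⟩
  · rintro (rfl | ⟨r, hr, hrc⟩)
    · exact ⟨e, Or.inl rfl, ha⟩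
    · exact ⟨r, Or.inr hr, hrc⟩

theorem pproj₁_insert_none {x : Set (Option A × Option B)} {e} (ha : e.1 = none) :
    pproj₁ (insert e x) = pproj₁ x := by
  ext c; constructor
  · rintro ⟨r, hr, hrc⟩
    rcases hr with rfl | hr
    · rw [ha] at hrc; cases hrc
    · exact ⟨r, hr, hrc⟩
  · rintro ⟨r, hr, hrc⟩; exact ⟨r, Or.inr hr, hrc⟩

theorem pproj₂_insert_some {x : Set (Option A × Option B)} {e} {b} (hb : e.2 = some b) :
    pproj₂ (insert e x) = insert b (pproj₂ x) := by
  ext c; constructor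
  · rintro ⟨r, hr, hrc⟩
    rcases hr with rfl | hr
    · left; rw [hb] at hrc; exact (Option.some_inj.mp hrc).symm
    · exact Or.inr ⟨r, hr, hrc⟩
  · rintro (rfl | ⟨r, hr, hrc⟩)
    · exact ⟨e, Or.inl rfl, hb⟩
    · exact ⟨r, Or.inr hr, hrc⟩

theorem pproj₂_insert_none {x : Set (Option A × Option B)} {e} (hb : e.2 = none) :
    pproj₂ (insert e x) = pproj₂ x := by
  ext c; constructor
  · rintro ⟨r, hr, hrc⟩
    rcases hr with rfl | hr
    · rw [hb] at hrc; cases hrc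
    · exact ⟨r, hr, hrc⟩
  · rintro ⟨r, hr, hrc⟩; exact ⟨r, Or.inr hr, hrc⟩

theorem pproj₁_diff_some {x : Set (Option A × Option B)} {e} {a} (ha : e.1 = some a)
    (he : e ∈ x) (hinj : pLocInj₁ x) :
    pproj₁ (x \ {e}) = pproj₁ x \ {a} := by
  ext c; constructor
  · rintro ⟨r, ⟨hr, hre⟩, hrc⟩
    refine ⟨⟨r, hr, hrc⟩, ?_⟩
    rintro rfl
    exact hre (hinj r hr e he c hrc ha)
  · rintro ⟨⟨r, hr, hrc⟩, hca⟩
    refine ⟨r, ⟨hr, ?_⟩, hrc⟩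
    rintro rfl
    rw [ha] at hrc; exact hca (Option.some_inj.mp hrc).symm

theorem pproj₁_diff_none {x : Set (Option A × Option B)} {e} (ha : e.1 = none) :
    pproj₁ (x \ {e}) = pproj₁ x := by
  ext c; constructor
  · rintro ⟨r, ⟨hr, _⟩, hrc⟩; exact ⟨r, hr, hrc⟩
  · rintro ⟨r, hr, hrc⟩
    refine ⟨r, ⟨hr, ?_⟩, hrc⟩
    rintro rfl; rw [ha] at hrc; cases hrc

theorem pproj₂_diff_some {x : Set (Option A × Option B)} {e} {b} (hb : e.2 = some b)
    (he : e ∈ x) (hinj : pLocInj₂ x) :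
    pproj₂ (x \ {e}) = pproj₂ x \ {b} := by
  ext c; constructor
  · rintro ⟨r, ⟨hr, hre⟩, hrc⟩
    refine ⟨⟨r, hr, hrc⟩, ?_⟩
    rintro rfl
    exact hre (hinj r hr e he c hrc hb)
  · rintro ⟨⟨r, hr, hrc⟩, hca⟩
    refine ⟨r, ⟨hr, ?_⟩, hrc⟩
    rintro rfl
    rw [hb] at hrc; exact hca (Option.some_inj.mp hrc).symm

theorem pproj₂_diff_none {x : Set (Option A × Option B)} {e} (hb : e.2 = none) :
    pproj₂ (x \ {e}) = pproj₂ x := by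
  ext c; constructor
  · rintro ⟨r, ⟨hr, _⟩, hrc⟩; exact ⟨r, hr, hrc⟩
  · rintro ⟨r, hr, hrc⟩
    refine ⟨r, ⟨hr, ?_⟩, hrc⟩
    rintro rfl; rw [hb] at hrc; cases hrc

theorem pproj₁_mono {x y : Set (Option A × Option B)} (h : x ⊆ y) : pproj₁ x ⊆ pproj₁ y := by
  rintro a ⟨r, hr, hrc⟩; exact ⟨r, h hr, hrc⟩

theorem pproj₂_mono {x y : Set (Option A × Option B)} (h : x ⊆ y) : pproj₂ x ⊆ pproj₂ y := by
  rintro a ⟨r, hr, hrc⟩; exact ⟨r, h hr, hrc⟩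

theorem pLocInj₁_mono {x y : Set (Option A × Option B)} (h : x ⊆ y) (hy : pLocInj₁ y) :
    pLocInj₁ x := fun e he e' he' a h1 h2 => hy e (h he) e' (h he') a h1 h2

theorem pLocInj₂_mono {x y : Set (Option A × Option B)} (h : x ⊆ y) (hy : pLocInj₂ y) :
    pLocInj₂ x := fun e he e' he' a h1 h2 => hy e (h he) e' (h he') a h1 h2

theorem pLocInj₁_insert {x : Set (Option A × Option B)} {e}
    (hx : pLocInj₁ x) (he : ∀ a, e.1 = some a → a ∉ pproj₁ x) :
    pLocInj₁ (insert e x) := by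
  rintro r (rfl | hr) s (rfl | hs) a h1 h2
  · rfl
  · exact absurd (mem_pproj₁ hs h2) (he a h1)
  · exact absurd (mem_pproj₁ hr h1) (he a h2)
  · exact hx r hr s hs a h1 h2

theorem pLocInj₂_insert {x : Set (Option A × Option B)} {e}
    (hx : pLocInj₂ x) (he : ∀ b, e.2 = some b → b ∉ pproj₂ x) :
    pLocInj₂ (insert e x) := by
  rintro r (rfl | hr) s (rfl | hs) a h1 h2
  · rfl
  · exact absurd (mem_pproj₂ hs h2) (he a h1)
  · exact absurd (mem_pproj₂ hr h1) (he a h2)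
  · exact hx r hr s hs a h1 h2

end pproj

open Relation

/-! prodLe machinery -/

section Prod
variable {N : Type} [DecidableEq N] {A B : LCS (Act N)}

/-- One-step component-induced causality in a candidate product configuration. -/
def prodLe (A B : LCS (Act N)) (x : Set (Option A.E × Option B.E))
    (r s : Option A.E × Option B.E) : Prop :=
  r ∈ x ∧ s ∈ x ∧
    ((∃ a a', r.1 = some a ∧ s.1 = some a' ∧ causeLe A.C (pproj₁ x) a a') ∨
     (∃ b b', r.2 = some b ∧ s.2 = some b' ∧ causeLe B.C (pproj₂ x) b b'))

/-- parPre subsets of x are downward closed for prodLe. -/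
theorem parPre_dc {x w : Set (Option A.E × Option B.E)}
    (hw : parPre A B w) (hwx : w ⊆ x) (hinj1 : pLocInj₁ x) (hinj2 : pLocInj₂ x)
    {r s} (hrs : prodLe A B x r s) (hs : s ∈ w) : r ∈ w := by
  obtain ⟨hr, hs', hc⟩ := hrs
  rcases hc with ⟨a, a', h1, h2, hc⟩ | ⟨b, b', h1, h2, hc⟩
  · have ha' : a' ∈ pproj₁ w := mem_pproj₁ hs h2
    have ha : a ∈ pproj₁ w := hc (pproj₁ w) hw.2.1 (pproj₁_mono hwx) ha'
    obtain ⟨t, ht, ht1⟩ := ha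
    have := hinj1 t (hwx ht) r hr a ht1 h1
    rwa [← this]
  · have hb' : b' ∈ pproj₂ w := mem_pproj₂ hs h2
    have hb : b ∈ pproj₂ w := hc (pproj₂ w) hw.2.2.1 (pproj₂_mono hwx) hb'
    obtain ⟨t, ht, ht1⟩ := hb
    have := hinj2 t (hwx ht) r hr b ht1 h1
    rwa [← this]

theorem rtg_closed {x w : Set (Option A.E × Option B.E)}
    (hdc : ∀ r s, prodLe A B x r s → s ∈ w → r ∈ w)
    {r s} (h : ReflTransGen (prodLe A B x) r s) (hs : s ∈ w) : r ∈ w := by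
  induction h with
  | refl => exact hs
  | tail _ hstep ih => exact ih (hdc _ _ hstep hs)

/-- single-step lift to causeLe in the product. -/
theorem prodLe_causeLe {x : Set (Option A.E × Option B.E)}
    (hinj1 : pLocInj₁ x) (hinj2 : pLocInj₂ x)
    {r s} (hrs : prodLe A B x r s) : causeLe (lcsPar A B).C x r s :=
  fun z hz hzx hs => parPre_dc hz.1 hzx hinj1 hinj2 hrs hs

theorem rtg_causeLe {x : Set (Option A.E × Option B.E)}
    (hinj1 : pLocInj₁ x) (hinj2 : pLocInj₂ x)
    {r s} (h : ReflTransGen (prodLe A B x) r s) : causeLe (lcsPar A B).C x r s := by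
  induction h with
  | refl => exact causeLe_refl _ _ _
  | tail _ hstep ih => exact causeLe_trans ih (prodLe_causeLe hinj1 hinj2 hstep)

/-- Down-closed subsets (for prodLe) of parPre sets are parPre. -/
theorem dc_parPre (hA : DCP A.C) (hB : DCP B.C)
    {x S : Set (Option A.E × Option B.E)} (hpre : parPre A B x) (hSx : S ⊆ x)
    (hdc : ∀ r s, prodLe A B x r s → s ∈ S → r ∈ S) : parPre A B S := by
  refine ⟨fun e he => hpre.1 e (hSx he), ?_, ?_,
    pLocInj₁_mono hSx hpre.2.2.2.1, pLocInj₂_mono hSx hpre.2.2.2.2⟩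
  · refine hA (pproj₁ x) hpre.2.1 (pproj₁ S) (pproj₁_mono hSx) ?_
    rintro a ⟨r, hr, hr1⟩ b ⟨t, ht, ht1⟩ hba
    exact ⟨t, hdc t r ⟨ht, hSx hr, Or.inl ⟨b, a, ht1, hr1, hba⟩⟩ hr, ht1⟩
  · refine hB (pproj₂ x) hpre.2.2.1 (pproj₂ S) (pproj₂_mono hSx) ?_
    rintro a ⟨r, hr, hr1⟩ b ⟨t, ht, ht1⟩ hba
    exact ⟨t, hdc t r ⟨ht, hSx hr, Or.inr ⟨b, a, ht1, hr1, hba⟩⟩ hr, ht1⟩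

/-- Main membership lemma: down-closed subsets of an antisymmetric parPre set
are configurations of the product. -/
theorem memAux [Finite A.E] [Finite B.E] (hA : DCP A.C) (hB : DCP B.C)
    {x : Set (Option A.E × Option B.E)} (hpre : parPre A B x)
    (hanti : ∀ r ∈ x, ∀ s ∈ x, ReflTransGen (prodLe A B x) r s →
      ReflTransGen (prodLe A B x) s r → r = s)
    {S : Set (Option A.E × Option B.E)} (hSx : S ⊆ x)
    (hdc : ∀ r s, prodLe A B x r s → s ∈ S → r ∈ S) :
    S ∈ (lcsPar A B).C := by
  have hSpre : parPre A B S := dc_parPre hA hB hpre hSx hdc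
  refine ⟨hSpre, ?_, ?_⟩
  · intro e he
    exact ⟨S, le_refl _, hSpre, Set.Finite.subset Set.finite_univ (Set.subset_univ S), he⟩
  · intro e he e' he' hne
    -- down-set of an element of S
    have hdset : ∀ u ∈ S, parPre A B {t ∈ S | ReflTransGen (prodLe A B x) t u} := by
      intro u hu
      refine dc_parPre hA hB hpre (fun t ht => hSx ht.1) ?_
      rintro r s hrs ⟨hsS, hsu⟩
      exact ⟨hdc r s hrs hsS, ReflTransGen.head hrs hsu⟩
    by_cases h1 : ReflTransGen (prodLe A B x) e e'
    · by_cases h2 : ReflTransGen (prodLe A B x) e' e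
      · exact absurd (hanti e (hSx he) e' (hSx he') h1 h2) hne
      · refine ⟨{t ∈ S | ReflTransGen (prodLe A B x) t e}, fun t ht => ht.1,
          hdset e he, ?_⟩
        simp only [Set.mem_setOf_eq]
        constructor
        · intro _ h; exact h2 h.2
        · intro _; exact ⟨he, ReflTransGen.refl⟩
    · refine ⟨{t ∈ S | ReflTransGen (prodLe A B x) t e'}, fun t ht => ht.1,
        hdset e' he', ?_⟩
      simp only [Set.mem_setOf_eq]
      constructor
      · intro h; exact absurd h.2 h1
      · intro h; exact absurd ⟨he', ReflTransGen.refl⟩ h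

/-- Antisymmetry of the reachability preorder on a configuration of the product. -/
theorem memAntisym {x : Set (Option A.E × Option B.E)} (hx : x ∈ (lcsPar A B).C) :
    ∀ r ∈ x, ∀ s ∈ x, ReflTransGen (prodLe A B x) r s →
      ReflTransGen (prodLe A B x) s r → r = s := by
  intro r hr s hs h1 h2
  by_contra hne
  obtain ⟨z, hzx, hzpre, hiff⟩ := hx.2.2 r hr s hs hne
  have hdc : ∀ a b, prodLe A B x a b → b ∈ z → a ∈ z :=
    fun a b hab hb => parPre_dc hzpre hzx hx.1.2.2.2.1 hx.1.2.2.2.2 hab hb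
  have e1 : s ∈ z → r ∈ z := fun h => rtg_closed hdc h1 h
  have e2 : r ∈ z → s ∈ z := fun h => rtg_closed hdc h2 h
  tauto

/-- Characterisation of causality in the product. -/
theorem causeChar [Finite A.E] [Finite B.E] (hA : DCP A.C) (hB : DCP B.C)
    {x : Set (Option A.E × Option B.E)} (hx : x ∈ (lcsPar A B).C)
    {r s} (hs : s ∈ x) :
    causeLe (lcsPar A B).C x r s ↔ ReflTransGen (prodLe A B x) r s := by
  constructor
  · intro h
    have hz : {t ∈ x | ReflTransGen (prodLe A B x) t s} ∈ (lcsPar A B).C := by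
      refine memAux hA hB hx.1 (memAntisym hx) (fun t ht => ht.1) ?_
      rintro a b hab ⟨hbx, hbs⟩
      exact ⟨hab.1, ReflTransGen.head hab hbs⟩
    exact (h _ hz (fun t ht => ht.1) ⟨hs, ReflTransGen.refl⟩).2
  · exact rtg_causeLe hx.1.2.2.2.1 hx.1.2.2.2.2

/-- Maximality: if `x \ {e}` is a configuration then `e` is prodLe-maximal in `x`. -/
theorem max_of_diff {x : Set (Option A.E × Option B.E)} (hx : x ∈ (lcsPar A B).C)
    {e} (he : e ∈ x) (hxe : x \ {e} ∈ (lcsPar A B).C)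
    {t} (ht : t ∈ x) (hne : t ≠ e) : ¬ prodLe A B x e t := by
  intro hst
  have := prodLe_causeLe hx.1.2.2.2.1 hx.1.2.2.2.2 hst (x \ {e}) hxe
    Set.diff_subset ⟨ht, hne⟩
  exact this.2 rfl

end Prod
section Enc
variable {N : Type} [DecidableEq N]

theorem encFinite (P : CCS N) : Finite (enc P).E := by
  induction P with
  | nil => exact inferInstanceAs (Finite Empty)
  | act α P ih => exact @myOptFinite _ ih
  | sum P Q ihP ihQ =>
      haveI := ihP; haveI := ihQ
      exact inferInstanceAs (Finite ((enc P).E ⊕ (enc Q).E))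
  | par P Q ihP ihQ =>
      haveI := ihP; haveI := ihQ
      exact inferInstanceAs (Finite (Option (enc P).E × Option (enc Q).E))
  | res a P ih => exact ih

theorem encEmpty (P : CCS N) : ∅ ∈ (enc P).C := by
  induction P with
  | nil => exact rfl
  | act α P ih => exact Or.inl rfl
  | sum P Q ihP ihQ => exact Or.inl ⟨∅, ihP, (Set.image_empty _).symm⟩
  | par P Q ihP ihQ =>
      refine ⟨⟨fun e he => absurd he (Set.notMem_empty e), ?_, ?_,
        fun e he => absurd he (Set.notMem_empty e),
        fun e he => absurd he (Set.notMem_empty e)⟩,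
        fun e he => absurd he (Set.notMem_empty e),
        fun e he => absurd he (Set.notMem_empty e)⟩
      · show pproj₁ (∅ : Set (Option (enc P).E × Option (enc Q).E)) ∈ (enc P).C
        rw [pproj₁_empty]; exact ihP
      · show pproj₂ (∅ : Set (Option (enc P).E × Option (enc Q).E)) ∈ (enc Q).C
        rw [pproj₂_empty]; exact ihQ
  | res a P ih => exact ⟨ih, fun e he => absurd he (Set.notMem_empty e)⟩

theorem encDCP (P : CCS N) : DCP (enc P).C := by
  induction P with
  | nil =>
      intro x hx S hS _
      have hx' : x = ∅ := hx
      subst hx'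
      have : S = ∅ := Set.subset_empty_iff.mp hS
      simp [this, enc, lcsNil]
      exact rfl
  | act α P ih =>
      rintro x (rfl | ⟨u, hu, rfl⟩) S hS hdc
      · have : S = ∅ := Set.subset_empty_iff.mp hS
        exact Or.inl this
      · by_cases hSe : S = ∅
        · exact Or.inl hSe
        · obtain ⟨e, he⟩ := Set.nonempty_iff_ne_empty.mpr hSe
          have hnone : none ∈ S := by
            refine hdc e he none (Set.mem_insert _ _) ?_
            rintro z (rfl | ⟨u', hu', rfl⟩) hzx hez
            · exact absurd hez (Set.notMem_empty e)
            · exact Set.mem_insert _ _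
          set T := {a | some a ∈ S} with hTdef
          have hTu : T ⊆ u := by
            intro a ha
            rcases hS ha with h | ⟨b, hb, hba⟩
            · cases h
            · rwa [← Option.some_inj.mp hba]
          have hsub : ∀ u' ∈ (enc P).C, insert none (Option.some '' u') ⊆
              insert (none : Option (enc P).E) (Option.some '' u) → u' ⊆ u := by
            intro u' _ hzx c hc
            rcases hzx (Set.mem_insert_iff.mpr (Or.inr ⟨c, hc, rfl⟩)) with h | ⟨d, hd, hdc'⟩
            · cases h
            · rwa [← Option.some_inj.mp hdc']
          have hT : DCl (enc P).C u T := by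
            intro a ha b hb hba
            refine hdc (some a) ha (some b)
              (Set.mem_insert_iff.mpr (Or.inr ⟨b, hb, rfl⟩)) ?_
            rintro z (rfl | ⟨u', hu', rfl⟩) hzx hmem
            · exact absurd hmem (Set.notMem_empty _)
            · have hu'u : u' ⊆ u := hsub u' hu' hzx
              have hau' : a ∈ u' := by
                rcases hmem with h | ⟨c, hc, hca⟩
                · cases h
                · rwa [← Option.some_inj.mp hca]
              exact Set.mem_insert_iff.mpr
                (Or.inr ⟨b, hba u' hu' hu'u hau', rfl⟩)
          have hTC : T ∈ (enc P).C := ih u hu T hTu hT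
          refine Or.inr ⟨T, hTC, ?_⟩
          ext s
          constructor
          · intro hs
            rcases hS hs with h | ⟨b, hb, hbs⟩
            · exact Or.inl h
            · refine Or.inr ⟨b, ?_, hbs⟩
              show some b ∈ S
              rwa [hbs]
          · rintro (rfl | ⟨b, hb, rfl⟩)
            · exact hnone
            · exact hb
  | sum P Q ihP ihQ =>
      rintro x (⟨u, hu, rfl⟩ | ⟨u, hu, rfl⟩) S hS hdc
      · set T := {a | Sum.inl a ∈ S} with hTdef
        have hTu : T ⊆ u := by
          intro a ha
          obtain ⟨b, hb, hba⟩ := hS ha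
          rwa [← Sum.inl.inj hba]
        have hT : DCl (enc P).C u T := by
          intro a ha b hb hba
          refine hdc (Sum.inl a) ha (Sum.inl b) ⟨b, hb, rfl⟩ ?_
          rintro z (⟨u', hu', rfl⟩ | ⟨v, hv, rfl⟩) hzx hmem
          · obtain ⟨c, hc, hca⟩ := hmem
            have hca' : c = a := Sum.inl.inj hca
            subst hca'
            have hu'u : u' ⊆ u := by
              intro d hd
              obtain ⟨d', hd', hdd⟩ := hzx ⟨d, hd, rfl⟩
              rwa [← Sum.inl.inj hdd]
            exact ⟨b, hba u' hu' hu'u hc, rfl⟩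
          · obtain ⟨c, _, hca⟩ := hmem
            cases hca
        refine Or.inl ⟨T, ihP u hu T hTu hT, ?_⟩
        ext s
        constructor
        · intro hs
          obtain ⟨b, hb, hbs⟩ := hS hs
          refine ⟨b, ?_, hbs⟩
          show Sum.inl b ∈ S
          rwa [hbs]
        · rintro ⟨b, hb, rfl⟩
          exact hb
      · set T := {a | Sum.inr a ∈ S} with hTdef
        have hTu : T ⊆ u := by
          intro a ha
          obtain ⟨b, hb, hba⟩ := hS ha
          rwa [← Sum.inr.inj hba]
        have hT : DCl (enc Q).C u T := by
          intro a ha b hb hba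
          refine hdc (Sum.inr a) ha (Sum.inr b) ⟨b, hb, rfl⟩ ?_
          rintro z (⟨v, hv, rfl⟩ | ⟨u', hu', rfl⟩) hzx hmem
          · obtain ⟨c, _, hca⟩ := hmem
            cases hca
          · obtain ⟨c, hc, hca⟩ := hmem
            have hca' : c = a := Sum.inr.inj hca
            subst hca'
            have hu'u : u' ⊆ u := by
              intro d hd
              obtain ⟨d', hd', hdd⟩ := hzx ⟨d, hd, rfl⟩
              rwa [← Sum.inr.inj hdd]
            exact ⟨b, hba u' hu' hu'u hc, rfl⟩
        refine Or.inr ⟨T, ihQ u hu T hTu hT, ?_⟩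
        ext s
        constructor
        · intro hs
          obtain ⟨b, hb, hbs⟩ := hS hs
          refine ⟨b, ?_, hbs⟩
          show Sum.inr b ∈ S
          rwa [hbs]
        · rintro ⟨b, hb, rfl⟩
          exact hb
  | par P Q ihP ihQ =>
      intro x hx S hS hdc
      haveI := encFinite P; haveI := encFinite Q
      refine memAux ihP ihQ hx.1 (memAntisym hx) hS ?_
      intro r s hrs hsS
      exact hdc s hsS r hrs.1
        (prodLe_causeLe hx.1.2.2.2.1 hx.1.2.2.2.2 hrs)
  | res b P ih =>
      intro x hx S hS hdc
      refine ⟨ih x hx.1 S hS ?_, fun e he => hx.2 e (hS he)⟩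
      intro a ha c hc hca
      exact hdc a ha c hc (fun z hz hzx hmem => hca z hz.1 hzx hmem)

end Enc
/-! Transfer machinery. -/

/-- Lifting of a relation on events to optional events. -/
def optRel {α β : Type*} (f : Set (α × β)) (o₁ : Option α) (o₂ : Option β) : Prop :=
  (o₁ = none ∧ o₂ = none) ∨ ∃ a b, o₁ = some a ∧ o₂ = some b ∧ (a, b) ∈ f

theorem rtg_gen_transfer {α β : Type*} {P : α → α → Prop} {Q : β → β → Prop}
    {G : Set (α × β)}
    (huniq : ∀ p q q', (p, q) ∈ G → (p, q') ∈ G → q = q')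
    (htot : ∀ u u', P u u' → ∃ v, (u, v) ∈ G)
    (hstep : ∀ p q p' q', (p, q) ∈ G → (p', q') ∈ G → P p p' → Q q q') :
    ∀ p p', Relation.ReflTransGen P p p' →
      ∀ q q', (p, q) ∈ G → (p', q') ∈ G → Relation.ReflTransGen Q q q' := by
  intro p p' h
  induction h with
  | refl =>
      intro q q' h1 h2
      rw [huniq _ _ _ h1 h2]
  | tail _ hstep' ih =>
      intro q q' hq hq'
      obtain ⟨v, hv⟩ := htot _ _ hstep'
      exact Relation.ReflTransGen.tail (ih q v hq hv) (hstep _ _ _ _ hv hq' hstep')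

section Transfer
variable {N : Type} [DecidableEq N] {A₁ A₂ B : LCS (Act N)}
variable {x : Set (Option A₁.E × Option B.E)} {y : Set (Option A₂.E × Option B.E)}
variable {f : Set (A₁.E × A₂.E)}
variable {g : Set ((Option A₁.E × Option B.E) × (Option A₂.E × Option B.E))}

theorem proj2_eq (hg : IsBij g x y) (hopt : ∀ p ∈ g, p.1.2 = p.2.2) :
    pproj₂ y = pproj₂ x := by
  ext b
  constructor
  · rintro ⟨q, hq, hqb⟩
    obtain ⟨p, hp, -⟩ := hg.2.2 q hq
    refine mem_pproj₂ ((hg.1 _ hp).1) ?_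
    rw [hopt _ hp]; exact hqb
  · rintro ⟨p, hp, hpb⟩
    obtain ⟨q, hq, -⟩ := hg.2.1 p hp
    refine mem_pproj₂ ((hg.1 _ hq).2) ?_
    rw [← hopt _ hq]; exact hpb

theorem step_transfer (hg : IsBij g x y)
    (hopt : ∀ p ∈ g, optRel f p.1.1 p.2.1 ∧ p.1.2 = p.2.2)
    (hford : ∀ p ∈ f, ∀ q ∈ f,
      (causeLe A₁.C (pproj₁ x) p.1 q.1 ↔ causeLe A₂.C (pproj₁ y) p.2 q.2))
    {p q p' q'} (hpq : (p, q) ∈ g) (hpq' : (p', q') ∈ g) :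
    prodLe A₁ B x p p' ↔ prodLe A₂ B y q q' := by
  have hproj2 : pproj₂ y = pproj₂ x := proj2_eq hg (fun p hp => (hopt p hp).2)
  have hqy : q ∈ y := (hg.1 _ hpq).2
  have hq'y : q' ∈ y := (hg.1 _ hpq').2
  have hpx : p ∈ x := (hg.1 _ hpq).1
  have hp'x : p' ∈ x := (hg.1 _ hpq').1
  constructor
  · rintro ⟨-, -, ⟨a, a', h1, h2, hc⟩ | ⟨b, b', h1, h2, hc⟩⟩
    · rcases (hopt _ hpq).1 with ⟨hn, -⟩ | ⟨a0, b0, hp1, hq1, hf⟩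
      · rw [hn] at h1; cases h1
      · rcases (hopt _ hpq').1 with ⟨hn, -⟩ | ⟨a0', b0', hp1', hq1', hf'⟩
        · rw [hn] at h2; cases h2
        · rw [hp1] at h1; rw [hp1'] at h2
          cases Option.some_inj.mp h1
          cases Option.some_inj.mp h2
          exact ⟨hqy, hq'y, Or.inl ⟨b0, b0', hq1, hq1',
            (hford _ hf _ hf').mp hc⟩⟩
    · refine ⟨hqy, hq'y, Or.inr ⟨b, b', ?_, ?_, ?_⟩⟩
      · rw [← (hopt _ hpq).2]; exact h1
      · rw [← (hopt _ hpq').2]; exact h2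
      · rwa [hproj2]
  · rintro ⟨-, -, ⟨b, b', h1, h2, hc⟩ | ⟨c, c', h1, h2, hc⟩⟩
    · rcases (hopt _ hpq).1 with ⟨-, hn⟩ | ⟨a0, b0, hp1, hq1, hf⟩
      · rw [hn] at h1; cases h1
      · rcases (hopt _ hpq').1 with ⟨-, hn⟩ | ⟨a0', b0', hp1', hq1', hf'⟩
        · rw [hn] at h2; cases h2
        · rw [hq1] at h1; rw [hq1'] at h2
          cases Option.some_inj.mp h1
          cases Option.some_inj.mp h2
          exact ⟨hpx, hp'x, Or.inl ⟨a0, a0', hp1, hp1',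
            (hford _ hf _ hf').mpr hc⟩⟩
    · refine ⟨hpx, hp'x, Or.inr ⟨c, c', ?_, ?_, ?_⟩⟩
      · rw [(hopt _ hpq).2]; exact h1
      · rw [(hopt _ hpq').2]; exact h2
      · rwa [← hproj2]

theorem rtg_transfer_fwd (hg : IsBij g x y)
    (hopt : ∀ p ∈ g, optRel f p.1.1 p.2.1 ∧ p.1.2 = p.2.2)
    (hford : ∀ p ∈ f, ∀ q ∈ f,
      (causeLe A₁.C (pproj₁ x) p.1 q.1 ↔ causeLe A₂.C (pproj₁ y) p.2 q.2))
    {p p' q q'} (h : Relation.ReflTransGen (prodLe A₁ B x) p p')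
    (hpq : (p, q) ∈ g) (hpq' : (p', q') ∈ g) :
    Relation.ReflTransGen (prodLe A₂ B y) q q' := by
  refine rtg_gen_transfer ?_ ?_ ?_ p p' h q q' hpq hpq'
  · intro u v v' h1 h2
    obtain ⟨w, -, huniq⟩ := hg.2.1 u (hg.1 _ h1).1
    rw [huniq v h1, huniq v' h2]
  · intro u u' hu
    obtain ⟨v, hv, -⟩ := hg.2.1 u hu.1
    exact ⟨v, hv⟩
  · intro a b a' b' h1 h2 h3
    exact (step_transfer hg hopt hford h1 h2).mp h3

theorem rtg_transfer_bwd (hg : IsBij g x y)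
    (hopt : ∀ p ∈ g, optRel f p.1.1 p.2.1 ∧ p.1.2 = p.2.2)
    (hford : ∀ p ∈ f, ∀ q ∈ f,
      (causeLe A₁.C (pproj₁ x) p.1 q.1 ↔ causeLe A₂.C (pproj₁ y) p.2 q.2))
    {p p' q q'} (h : Relation.ReflTransGen (prodLe A₂ B y) q q')
    (hpq : (p, q) ∈ g) (hpq' : (p', q') ∈ g) :
    Relation.ReflTransGen (prodLe A₁ B x) p p' := by
  refine rtg_gen_transfer (G := {r | (r.2, r.1) ∈ g}) ?_ ?_ ?_ q q' h p p' hpq hpq'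
  · intro u v v' h1 h2
    obtain ⟨w, -, huniq⟩ := hg.2.2 u (hg.1 _ h1).2
    rw [huniq v h1, huniq v' h2]
  · intro u u' hu
    obtain ⟨v, hv, -⟩ := hg.2.2 u hu.1
    exact ⟨v, hv⟩
  · intro a b a' b' h1 h2 h3
    exact (step_transfer hg hopt hford h1 h2).mpr h3

theorem antisym_transfer (hg : IsBij g x y)
    (hopt : ∀ p ∈ g, optRel f p.1.1 p.2.1 ∧ p.1.2 = p.2.2)
    (hford : ∀ p ∈ f, ∀ q ∈ f,
      (causeLe A₁.C (pproj₁ x) p.1 q.1 ↔ causeLe A₂.C (pproj₁ y) p.2 q.2))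
    (hanti : ∀ r ∈ x, ∀ s ∈ x, Relation.ReflTransGen (prodLe A₁ B x) r s →
      Relation.ReflTransGen (prodLe A₁ B x) s r → r = s) :
    ∀ r ∈ y, ∀ s ∈ y, Relation.ReflTransGen (prodLe A₂ B y) r s →
      Relation.ReflTransGen (prodLe A₂ B y) s r → r = s := by
  intro r hr s hs h1 h2
  obtain ⟨p, hp, -⟩ := hg.2.2 r hr
  obtain ⟨p', hp', -⟩ := hg.2.2 s hs
  have e1 := rtg_transfer_bwd hg hopt hford h1 hp hp'
  have e2 := rtg_transfer_bwd hg hopt hford h2 hp' hp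
  have : p = p' := hanti p (hg.1 _ hp).1 p' (hg.1 _ hp').1 e1 e2
  subst this
  obtain ⟨w, -, huniq⟩ := hg.2.1 p (hg.1 _ hp).1
  rw [huniq r hp, huniq s hp']

end Transfer

/-! Bijection helpers. -/

section Bij
variable {α β : Type*}

theorem isBij_insert {g : Set (α × β)} {x : Set α} {y : Set β}
    (hg : IsBij g x y) {e : α} {e' : β} (he : e ∉ x) (he' : e' ∉ y) :
    IsBij (insert (e, e') g) (insert e x) (insert e' y) := by
  refine ⟨?_, ?_, ?_⟩
  · rintro p (rfl | hp)
    · exact ⟨Set.mem_insert _ _, Set.mem_insert _ _⟩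
    · exact ⟨Or.inr (hg.1 _ hp).1, Or.inr (hg.1 _ hp).2⟩
  · rintro a (rfl | ha)
    · refine ⟨e', Or.inl rfl, ?_⟩
      rintro b (hb | hb)
      · exact (Prod.mk.injEq _ _ _ _ ▸ hb).2
      · exact absurd (hg.1 _ hb).1 he
    · obtain ⟨b, hb, hbu⟩ := hg.2.1 a ha
      refine ⟨b, Or.inr hb, ?_⟩
      rintro c (hc | hc)
      · exact absurd ((Prod.mk.injEq _ _ _ _ ▸ hc).1 ▸ ha) he
      · exact hbu c hc
  · rintro b (rfl | hb)
    · refine ⟨e, Or.inl rfl, ?_⟩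
      rintro a (ha | ha)
      · exact (Prod.mk.injEq _ _ _ _ ▸ ha).1
      · exact absurd (hg.1 _ ha).2 he'
    · obtain ⟨a, ha, hau⟩ := hg.2.2 b hb
      refine ⟨a, Or.inr ha, ?_⟩
      rintro c (hc | hc)
      · exact absurd ((Prod.mk.injEq _ _ _ _ ▸ hc).2 ▸ hb) he'
      · exact hau c hc

theorem isBij_restr {g : Set (α × β)} {x : Set α} {y : Set β}
    (hg : IsBij g x y) {e : α} {q : β} (heq : (e, q) ∈ g) :
    IsBij (restrMap g (x \ {e})) (x \ {e}) (y \ {q}) := by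
  refine ⟨?_, ?_, ?_⟩
  · rintro ⟨p, q'⟩ ⟨hpg, hpx⟩
    refine ⟨hpx, (hg.1 _ hpg).2, ?_⟩
    intro hq'
    obtain ⟨w, -, huniq⟩ := hg.2.2 q ((hg.1 _ heq).2)
    have h1 : p = w := huniq p (by rwa [show q' = q from hq'] at hpg)
    have h2 : e = w := huniq e heq
    exact hpx.2 (h1.trans h2.symm)
  · rintro a ⟨ha, hae⟩
    obtain ⟨b, hb, hbu⟩ := hg.2.1 a ha
    exact ⟨b, ⟨hb, ⟨ha, hae⟩⟩, fun c hc => hbu c hc.1⟩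
  · rintro b ⟨hb, hbq⟩
    obtain ⟨p, hp, hpu⟩ := hg.2.2 b hb
    have hpe : p ≠ e := by
      rintro rfl
      obtain ⟨w, -, huniq⟩ := hg.2.1 p (hg.1 _ hp).1
      exact hbq ((huniq b hp).trans (huniq q heq).symm)
    exact ⟨p, ⟨hp, ⟨(hg.1 _ hp).1, hpe⟩⟩, fun c hc => hpu c hc.1⟩

theorem restr_self {f : Set (α × β)} {x : Set α}
    (h : ∀ p ∈ f, p.1 ∈ x) : restrMap f x = f := by
  ext p
  exact ⟨fun hp => hp.1, fun hp => ⟨hp, h p hp⟩⟩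

theorem restr_insert {g : Set (α × β)} {x : Set α} {e : α} {e' : β}
    (hdom : ∀ p ∈ g, p.1 ∈ x) (he : e ∉ x) :
    restrMap (insert (e, e') g) x = g := by
  ext p
  constructor
  · rintro ⟨(rfl | hp), hpx⟩
    · exact absurd hpx he
    · exact hp
  · intro hp
    exact ⟨Or.inr hp, hdom p hp⟩

theorem newPair {f f' : Set (α × β)} {x₁ : Set α} {x₂ : Set β} {a : α} {b : β}
    (hf : IsBij f x₁ x₂) (hf' : IsBij f' (insert a x₁) (insert b x₂))
    (hb : b ∉ x₂) (hres : f = restrMap f' x₁) : (a, b) ∈ f' := by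
  obtain ⟨c, hc, -⟩ := hf'.2.2 b (Set.mem_insert _ _)
  rcases (hf'.1 _ hc).1 with rfl | hcx
  · exact hc
  · have : (c, b) ∈ f := by rw [hres]; exact ⟨hc, hcx⟩
    exact absurd (hf.1 _ this).2 hb

theorem delPair {f : Set (α × β)} {x₁ : Set α} {x₂ : Set β} {a : α} {a₂ b : β}
    (hf : IsBij f x₁ x₂)
    (hf'' : IsBij (restrMap f (x₁ \ {a})) (x₁ \ {a}) (x₂ \ {a₂}))
    (hab : (a, b) ∈ f) : b = a₂ := by
  by_contra hne
  have hb : b ∈ x₂ := (hf.1 _ hab).2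
  obtain ⟨c, hc, -⟩ := hf''.2.2 b ⟨hb, hne⟩
  obtain ⟨w, -, huniq⟩ := hf.2.2 b hb
  exact hc.2.2 ((huniq c hc.1).trans (huniq a hab).symm)

end Bij

section Fresh
variable {A B : Type}

theorem fresh₁ {x : Set (Option A × Option B)} {e} (he : e ∉ x)
    (hinj : pLocInj₁ (insert e x)) {a} (ha : e.1 = some a) : a ∉ pproj₁ x := by
  rintro ⟨r, hr, hr1⟩
  exact he (hinj r (Or.inr hr) e (Set.mem_insert _ _) a hr1 ha ▸ hr)

theorem fresh₂ {x : Set (Option A × Option B)} {e} (he : e ∉ x)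
    (hinj : pLocInj₂ (insert e x)) {b} (hb : e.2 = some b) : b ∉ pproj₂ x := by
  rintro ⟨r, hr, hr1⟩
  exact he (hinj r (Or.inr hr) e (Set.mem_insert _ _) b hr1 hb ▸ hr)

theorem not_mem_of_fresh₁ {y : Set (Option A × Option B)} {e'} {b}
    (hb1 : e'.1 = some b) (hb : b ∉ pproj₁ y) : e' ∉ y :=
  fun h => hb (mem_pproj₁ h hb1)

theorem not_mem_of_fresh₂ {y : Set (Option A × Option B)} {e'} {b}
    (hb1 : e'.2 = some b) (hb : b ∉ pproj₂ y) : e' ∉ y :=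
  fun h => hb (mem_pproj₂ h hb1)

end Fresh
section Transfer2
variable {N : Type} [DecidableEq N] {A₁ A₂ B : LCS (Act N)}
variable {x : Set (Option A₁.E × Option B.E)} {y : Set (Option A₂.E × Option B.E)}
variable {f : Set (A₁.E × A₂.E)}
variable {g : Set ((Option A₁.E × Option B.E) × (Option A₂.E × Option B.E))}

theorem antisym_transfer' (hg : IsBij g x y)
    (hopt : ∀ p ∈ g, optRel f p.1.1 p.2.1 ∧ p.1.2 = p.2.2)
    (hford : ∀ p ∈ f, ∀ q ∈ f,
      (causeLe A₁.C (pproj₁ x) p.1 q.1 ↔ causeLe A₂.C (pproj₁ y) p.2 q.2))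
    (hanti : ∀ r ∈ y, ∀ s ∈ y, Relation.ReflTransGen (prodLe A₂ B y) r s →
      Relation.ReflTransGen (prodLe A₂ B y) s r → r = s) :
    ∀ r ∈ x, ∀ s ∈ x, Relation.ReflTransGen (prodLe A₁ B x) r s →
      Relation.ReflTransGen (prodLe A₁ B x) s r → r = s := by
  intro r hr s hs h1 h2
  obtain ⟨q, hq, -⟩ := hg.2.1 r hr
  obtain ⟨q', hq', -⟩ := hg.2.1 s hs
  have e1 := rtg_transfer_fwd hg hopt hford h1 hq hq'
  have e2 := rtg_transfer_fwd hg hopt hford h2 hq' hq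
  have : q = q' := hanti q (hg.1 _ hq).2 q' (hg.1 _ hq').2 e1 e2
  subst this
  obtain ⟨w, -, huniq⟩ := hg.2.2 q (hg.1 _ hq).2
  rw [huniq r hq, huniq s hq']

end Transfer2

theorem delPair' {α β : Type*} {f : Set (α × β)} {x₁ : Set α} {x₂ : Set β}
    {a a' : α} {a₂ : β} (hf : IsBij f x₁ x₂)
    (hf'' : IsBij (restrMap f (x₁ \ {a'})) (x₁ \ {a'}) (x₂ \ {a₂}))
    (hab : (a, a₂) ∈ f) : a = a' := by
  by_contra hne
  have ha : a ∈ x₁ := (hf.1 _ hab).1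
  obtain ⟨d, hd, -⟩ := hf''.2.1 a ⟨ha, hne⟩
  obtain ⟨w, -, huniq⟩ := hf.2.1 a ha
  have : d = a₂ := (huniq d hd.1).trans (huniq a₂ hab).symm
  exact ((hf''.1 _ hd).2).2 this
theorem pproj₂_insert_pair {A A' B : Type} {x : Set (Option A × Option B)}
    {y : Set (Option A' × Option B)} (h : pproj₂ y = pproj₂ x)
    (o : Option A) (o' : Option A') (u : Option B) :
    pproj₂ (insert (o', u) y) = pproj₂ (insert (o, u) x) := by
  cases u with
  | none => rw [pproj₂_insert_none rfl, pproj₂_insert_none rfl, h]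
  | some b => rw [pproj₂_insert_some rfl, pproj₂_insert_some rfl, h]
/-- hereditary history preserving bisimulation between the
encodings of `P₁` and `P₂` is preserved by parallel contexts. -/
theorem hhpb_preserved_by_parallel_context {N : Type} [DecidableEq N]
    (P₁ P₂ : CCS N)
    (h : ∃ R, IsHHPB (enc P₁).C (enc P₂).C (enc P₁).lab (enc P₂).lab R) :
    ∀ Q : CCS N, ∃ R',
      IsHHPB (enc (CCS.par P₁ Q)).C (enc (CCS.par P₂ Q)).C
        (enc (CCS.par P₁ Q)).lab (enc (CCS.par P₂ Q)).lab R' := by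
  obtain ⟨R, hR⟩ := h
  intro Q
  haveI := encFinite P₁; haveI := encFinite P₂; haveI := encFinite Q
  show ∃ R', IsHHPB (lcsPar (enc P₁) (enc Q)).C (lcsPar (enc P₂) (enc Q)).C
      (lcsPar (enc P₁) (enc Q)).lab (lcsPar (enc P₂) (enc Q)).lab R'
  refine ⟨fun x y g =>
      x ∈ (lcsPar (enc P₁) (enc Q)).C ∧ y ∈ (lcsPar (enc P₂) (enc Q)).C ∧
      ∃ f, R (pproj₁ x) (pproj₁ y) f ∧ IsBij g x y ∧
        (∀ p ∈ g, optRel f p.1.1 p.2.1 ∧ p.1.2 = p.2.2), ?_, ?_⟩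
  · refine ⟨encEmpty (CCS.par P₁ Q), encEmpty (CCS.par P₂ Q), ∅, ?_, ?_, ?_⟩
    · show R (pproj₁ (∅ : Set (Option (enc P₁).E × Option (enc Q).E)))
        (pproj₁ (∅ : Set (Option (enc P₂).E × Option (enc Q).E))) ∅
      rw [pproj₁_empty, pproj₁_empty]; exact hR.1
    · exact ⟨fun p hp => absurd hp (Set.notMem_empty p),
        fun a ha => absurd ha (Set.notMem_empty a),
        fun a ha => absurd ha (Set.notMem_empty a)⟩
    · exact fun p hp => absurd hp (Set.notMem_empty p)
  · rintro x y g ⟨hx, hy, f, hf, hbij, hopt⟩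
    have hRf := hR.2 _ _ _ hf
    have hIso := hRf.2.2.1
    have hford := hIso.2.2
    have hproj2 : pproj₂ y = pproj₂ x := proj2_eq hbij fun p hp => (hopt p hp).2
    have hinj1x : pLocInj₁ x := hx.1.2.2.2.1
    have hinj2x : pLocInj₂ x := hx.1.2.2.2.2
    have hinj1y : pLocInj₁ y := hy.1.2.2.2.1
    have hinj2y : pLocInj₂ y := hy.1.2.2.2.2
    refine ⟨hx, hy, ⟨hbij, ?_, ?_⟩, ?_, ?_, ?_, ?_⟩
    · -- labels
      intro p hp
      show (syncLab (Option.map (enc P₁).lab p.1.1) (Option.map (enc Q).lab p.1.2)).getD .tau =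
        (syncLab (Option.map (enc P₂).lab p.2.1) (Option.map (enc Q).lab p.2.2)).getD .tau
      have h2 := (hopt p hp).2
      rcases (hopt p hp).1 with ⟨hn1, hn2⟩ | ⟨a, b, ha, hb, hfab⟩
      · rw [hn1, hn2, ← h2]
        rfl
      · rw [ha, hb, ← h2, Option.map_some, Option.map_some, hIso.2.1 _ hfab]
    · -- order
      intro p hp q hq
      have hp1 : p.1 ∈ x := (hbij.1 p hp).1
      have hq1 : q.1 ∈ x := (hbij.1 q hq).1
      have hq2 : q.2 ∈ y := (hbij.1 q hq).2
      have hp' : (p.1, p.2) ∈ g := by rw [Prod.mk.eta]; exact hp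
      have hq' : (q.1, q.2) ∈ g := by rw [Prod.mk.eta]; exact hq
      rw [causeChar (encDCP P₁) (encDCP Q) hx hq1,
          causeChar (encDCP P₂) (encDCP Q) hy hq2]
      exact ⟨fun hc => rtg_transfer_fwd hbij hopt hford hc hp' hq',
        fun hc => rtg_transfer_bwd hbij hopt hford hc hp' hq'⟩
    · -- forward, left to right
      intro e he hins
      rcases he1 : e.1 with _ | a
      · -- e.1 = none
        obtain ⟨b, he2⟩ : ∃ b, e.2 = some b := by
          rcases he2 : e.2 with _ | b
          · exfalso
            apply hins.1.1 e (Set.mem_insert _ _)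
            rw [he1, he2]
            rfl
          · exact ⟨b, rfl⟩
        have hbx : b ∉ pproj₂ x := fresh₂ he hins.1.2.2.2.2 he2
        have he'y : ((none : Option (enc P₂).E), e.2) ∉ y := by
          refine not_mem_of_fresh₂ (show ((none : Option (enc P₂).E), e.2).2 = some b from he2) ?_
          rw [hproj2]; exact hbx
        have hgbij' := isBij_insert hbij he he'y
        have hopt' : ∀ p ∈ insert (e, ((none : Option (enc P₂).E), e.2)) g,
            optRel f p.1.1 p.2.1 ∧ p.1.2 = p.2.2 := by
          rintro p (rfl | hp)
          · exact ⟨Or.inl ⟨he1, rfl⟩, rfl⟩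
          · exact hopt p hp
        have hpx1 : pproj₁ (insert e x) = pproj₁ x := pproj₁_insert_none he1
        have hpy1 : pproj₁ (insert ((none : Option (enc P₂).E), e.2) y) = pproj₁ y :=
          pproj₁_insert_none rfl
        have hpy2 : pproj₂ (insert ((none : Option (enc P₂).E), e.2) y) = pproj₂ (insert e x) := by
          have hh := pproj₂_insert_pair hproj2 e.1 (none : Option (enc P₂).E) e.2
          exact hh
        have hford' : ∀ p ∈ f, ∀ q ∈ f,
            (causeLe (enc P₁).C (pproj₁ (insert e x)) p.1 q.1 ↔
             causeLe (enc P₂).C (pproj₁ (insert ((none : Option (enc P₂).E), e.2) y)) p.2 q.2) := by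
          rw [hpx1, hpy1]; exact hford
        have hpre' : parPre (enc P₂) (enc Q) (insert ((none : Option (enc P₂).E), e.2) y) := by
          refine ⟨?_, ?_, ?_, ?_, ?_⟩
          · rintro r (rfl | hr)
            · show syncLab (Option.map (enc P₂).lab none) (Option.map (enc Q).lab e.2) ≠ none
              rw [he2]
              intro hcon
              cases hcon
            · exact hy.1.1 r hr
          · rw [hpy1]; exact hy.1.2.1
          · rw [hpy2]; exact hins.1.2.2.1
          · refine pLocInj₁_insert hinj1y ?_
            intro c hc
            cases hc
          · refine pLocInj₂_insert hinj2y ?_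
            intro c hc
            have hc' : e.2 = some c := hc
            rw [he2] at hc'
            obtain rfl := Option.some_inj.mp hc'
            rw [hproj2]; exact hbx
        have hanti' := antisym_transfer hgbij' hopt' hford' (memAntisym hins)
        have hy' : insert ((none : Option (enc P₂).E), e.2) y ∈ (lcsPar (enc P₂) (enc Q)).C :=
          memAux (encDCP P₂) (encDCP Q) hpre' hanti' subset_rfl (fun r s hrs _ => hrs.1)
        refine ⟨((none : Option (enc P₂).E), e.2), insert (e, ((none : Option (enc P₂).E), e.2)) g,
          he'y, hy', ⟨hins, hy', f, ?_, hgbij', hopt'⟩, ?_⟩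
        · exact (congrArg₂ (fun u v => R u v f) hpx1 hpy1).mpr hf
        · exact (restr_insert (fun p hp => (hbij.1 p hp).1) he).symm
      · -- e.1 = some a
        have haX : a ∉ pproj₁ x := fresh₁ he hins.1.2.2.2.1 he1
        have hinsX : insert a (pproj₁ x) ∈ (enc P₁).C := by
          exact (congrArg (· ∈ (enc P₁).C) (pproj₁_insert_some he1)).mp hins.1.2.1
        obtain ⟨a₂, f', ha₂, hinsY, hf', hres⟩ := hRf.2.2.2.1 a haX hinsX
        have hRf' := hR.2 _ _ _ hf'
        have hbij' : IsBij f' (insert a (pproj₁ x)) (insert a₂ (pproj₁ y)) := hRf'.2.2.1.1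
        have hpair : (a, a₂) ∈ f' := newPair hIso.1 hbij' ha₂ hres
        have hlabeq : (enc P₁).lab a = (enc P₂).lab a₂ := hRf'.2.2.1.2.1 _ hpair
        have he'y : (((some a₂ : Option (enc P₂).E), e.2)) ∉ y := not_mem_of_fresh₁ rfl ha₂
        have hgbij' := isBij_insert hbij he he'y
        have hopt' : ∀ p ∈ insert (e, ((some a₂ : Option (enc P₂).E), e.2)) g,
            optRel f' p.1.1 p.2.1 ∧ p.1.2 = p.2.2 := by
          rintro p (rfl | hp)
          · exact ⟨Or.inr ⟨a, a₂, he1, rfl, hpair⟩, rfl⟩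
          · refine ⟨?_, (hopt p hp).2⟩
            rcases (hopt p hp).1 with hn | ⟨c, d, h1, h2, hcd⟩
            · exact Or.inl hn
            · rw [hres] at hcd
              exact Or.inr ⟨c, d, h1, h2, hcd.1⟩
        have hpx1 : pproj₁ (insert e x) = insert a (pproj₁ x) := pproj₁_insert_some he1
        have hpy1 : pproj₁ (insert ((some a₂ : Option (enc P₂).E), e.2) y) = insert a₂ (pproj₁ y) :=
          pproj₁_insert_some rfl
        have hpy2 : pproj₂ (insert ((some a₂ : Option (enc P₂).E), e.2) y) = pproj₂ (insert e x) := by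
          have hh := pproj₂_insert_pair hproj2 e.1 (some a₂ : Option (enc P₂).E) e.2
          exact hh
        have hford' : ∀ p ∈ f', ∀ q ∈ f',
            (causeLe (enc P₁).C (pproj₁ (insert e x)) p.1 q.1 ↔
             causeLe (enc P₂).C (pproj₁ (insert ((some a₂ : Option (enc P₂).E), e.2) y)) p.2 q.2) := by
          rw [hpx1, hpy1]; exact hRf'.2.2.1.2.2
        have hpre' : parPre (enc P₂) (enc Q) (insert ((some a₂ : Option (enc P₂).E), e.2) y) := by
          refine ⟨?_, ?_, ?_, ?_, ?_⟩
          · rintro r (rfl | hr)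
            · show syncLab (Option.map (enc P₂).lab (some a₂)) (Option.map (enc Q).lab e.2) ≠ none
              have hl := hins.1.1 e (Set.mem_insert _ _)
              rw [he1] at hl
              rw [Option.map_some] at hl ⊢
              rw [← hlabeq]
              exact hl
            · exact hy.1.1 r hr
          · rw [hpy1]; exact hinsY
          · rw [hpy2]; exact hins.1.2.2.1
          · refine pLocInj₁_insert hinj1y ?_
            intro c hc
            obtain rfl := Option.some_inj.mp hc
            exact ha₂
          · refine pLocInj₂_insert hinj2y ?_
            intro c hc
            rw [hproj2]
            exact fresh₂ he hins.1.2.2.2.2 hc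
        have hanti' := antisym_transfer hgbij' hopt' hford' (memAntisym hins)
        have hy' : insert ((some a₂ : Option (enc P₂).E), e.2) y ∈ (lcsPar (enc P₂) (enc Q)).C :=
          memAux (encDCP P₂) (encDCP Q) hpre' hanti' subset_rfl (fun r s hrs _ => hrs.1)
        refine ⟨((some a₂ : Option (enc P₂).E), e.2),
          insert (e, ((some a₂ : Option (enc P₂).E), e.2)) g,
          he'y, hy', ⟨hins, hy', f', ?_, hgbij', hopt'⟩, ?_⟩
        · exact (congrArg₂ (fun u v => R u v f') hpx1 hpy1).mpr hf'
        · exact (restr_insert (fun p hp => (hbij.1 p hp).1) he).symm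
    · -- forward, right to left
      intro e' he' hins
      rcases he1 : e'.1 with _ | a₂
      · -- e'.1 = none
        obtain ⟨b, he2⟩ : ∃ b, e'.2 = some b := by
          rcases he2 : e'.2 with _ | b
          · exfalso
            apply hins.1.1 e' (Set.mem_insert _ _)
            rw [he1, he2]
            rfl
          · exact ⟨b, rfl⟩
        have hby : b ∉ pproj₂ y := fresh₂ he' hins.1.2.2.2.2 he2
        have hbx : b ∉ pproj₂ x := by rw [← hproj2]; exact hby
        have hex : ((none : Option (enc P₁).E), e'.2) ∉ x :=
          not_mem_of_fresh₂ (show ((none : Option (enc P₁).E), e'.2).2 = some b from he2) hbx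
        have hgbij' := isBij_insert hbij hex he'
        have hopt' : ∀ p ∈ insert (((none : Option (enc P₁).E), e'.2), e') g,
            optRel f p.1.1 p.2.1 ∧ p.1.2 = p.2.2 := by
          rintro p (rfl | hp)
          · exact ⟨Or.inl ⟨rfl, he1⟩, rfl⟩
          · exact hopt p hp
        have hpx1 : pproj₁ (insert ((none : Option (enc P₁).E), e'.2) x) = pproj₁ x :=
          pproj₁_insert_none rfl
        have hpy1 : pproj₁ (insert e' y) = pproj₁ y := pproj₁_insert_none he1
        have hpx2 : pproj₂ (insert ((none : Option (enc P₁).E), e'.2) x) = pproj₂ (insert e' y) := by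
          have hh := pproj₂_insert_pair hproj2.symm e'.1 (none : Option (enc P₁).E) e'.2
          exact hh
        have hford' : ∀ p ∈ f, ∀ q ∈ f,
            (causeLe (enc P₁).C (pproj₁ (insert ((none : Option (enc P₁).E), e'.2) x)) p.1 q.1 ↔
             causeLe (enc P₂).C (pproj₁ (insert e' y)) p.2 q.2) := by
          rw [hpx1, hpy1]; exact hford
        have hpre' : parPre (enc P₁) (enc Q) (insert ((none : Option (enc P₁).E), e'.2) x) := by
          refine ⟨?_, ?_, ?_, ?_, ?_⟩
          · rintro r (rfl | hr)
            · show syncLab (Option.map (enc P₁).lab none) (Option.map (enc Q).lab e'.2) ≠ none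
              rw [he2]
              intro hcon
              cases hcon
            · exact hx.1.1 r hr
          · rw [hpx1]; exact hx.1.2.1
          · rw [hpx2]; exact hins.1.2.2.1
          · refine pLocInj₁_insert hinj1x ?_
            intro c hc
            cases hc
          · refine pLocInj₂_insert hinj2x ?_
            intro c hc
            have hc' : e'.2 = some c := hc
            rw [he2] at hc'
            obtain rfl := Option.some_inj.mp hc'
            exact hbx
        have hanti' := antisym_transfer' hgbij' hopt' hford' (memAntisym hins)
        have hx' : insert ((none : Option (enc P₁).E), e'.2) x ∈ (lcsPar (enc P₁) (enc Q)).C :=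
          memAux (encDCP P₁) (encDCP Q) hpre' hanti' subset_rfl (fun r s hrs _ => hrs.1)
        refine ⟨((none : Option (enc P₁).E), e'.2),
          insert (((none : Option (enc P₁).E), e'.2), e') g,
          hex, hx', ⟨hx', hins, f, ?_, hgbij', hopt'⟩, ?_⟩
        · exact (congrArg₂ (fun u v => R u v f) hpx1 hpy1).mpr hf
        · exact (restr_insert (fun p hp => (hbij.1 p hp).1) hex).symm
      · -- e'.1 = some a₂
        have ha₂Y : a₂ ∉ pproj₁ y := fresh₁ he' hins.1.2.2.2.1 he1
        have hinsY : insert a₂ (pproj₁ y) ∈ (enc P₂).C := by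
          exact (congrArg (· ∈ (enc P₂).C) (pproj₁_insert_some he1)).mp hins.1.2.1
        obtain ⟨a, f', haX, hinsX, hf', hres⟩ := hRf.2.2.2.2.1 a₂ ha₂Y hinsY
        have hRf' := hR.2 _ _ _ hf'
        have hbij' : IsBij f' (insert a (pproj₁ x)) (insert a₂ (pproj₁ y)) := hRf'.2.2.1.1
        have hpair : (a, a₂) ∈ f' := newPair hIso.1 hbij' ha₂Y hres
        have hlabeq : (enc P₁).lab a = (enc P₂).lab a₂ := hRf'.2.2.1.2.1 _ hpair
        have hex : (((some a : Option (enc P₁).E), e'.2)) ∉ x := not_mem_of_fresh₁ rfl haX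
        have hgbij' := isBij_insert hbij hex he'
        have hopt' : ∀ p ∈ insert (((some a : Option (enc P₁).E), e'.2), e') g,
            optRel f' p.1.1 p.2.1 ∧ p.1.2 = p.2.2 := by
          rintro p (rfl | hp)
          · exact ⟨Or.inr ⟨a, a₂, rfl, he1, hpair⟩, rfl⟩
          · refine ⟨?_, (hopt p hp).2⟩
            rcases (hopt p hp).1 with hn | ⟨c, d, h1, h2, hcd⟩
            · exact Or.inl hn
            · rw [hres] at hcd
              exact Or.inr ⟨c, d, h1, h2, hcd.1⟩
        have hpx1 : pproj₁ (insert ((some a : Option (enc P₁).E), e'.2) x) = insert a (pproj₁ x) :=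
          pproj₁_insert_some rfl
        have hpy1 : pproj₁ (insert e' y) = insert a₂ (pproj₁ y) := pproj₁_insert_some he1
        have hpx2 : pproj₂ (insert ((some a : Option (enc P₁).E), e'.2) x) = pproj₂ (insert e' y) := by
          have hh := pproj₂_insert_pair hproj2.symm e'.1 (some a : Option (enc P₁).E) e'.2
          exact hh
        have hford' : ∀ p ∈ f', ∀ q ∈ f',
            (causeLe (enc P₁).C (pproj₁ (insert ((some a : Option (enc P₁).E), e'.2) x)) p.1 q.1 ↔
             causeLe (enc P₂).C (pproj₁ (insert e' y)) p.2 q.2) := by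
          rw [hpx1, hpy1]; exact hRf'.2.2.1.2.2
        have hpre' : parPre (enc P₁) (enc Q) (insert ((some a : Option (enc P₁).E), e'.2) x) := by
          refine ⟨?_, ?_, ?_, ?_, ?_⟩
          · rintro r (rfl | hr)
            · show syncLab (Option.map (enc P₁).lab (some a)) (Option.map (enc Q).lab e'.2) ≠ none
              have hl := hins.1.1 e' (Set.mem_insert _ _)
              rw [he1] at hl
              rw [Option.map_some] at hl ⊢
              rw [hlabeq]
              exact hl
            · exact hx.1.1 r hr
          · rw [hpx1]; exact hinsX
          · rw [hpx2]; exact hins.1.2.2.1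
          · refine pLocInj₁_insert hinj1x ?_
            intro c hc
            obtain rfl := Option.some_inj.mp hc
            exact haX
          · refine pLocInj₂_insert hinj2x ?_
            intro c hc
            have hby : c ∉ pproj₂ y := fresh₂ he' hins.1.2.2.2.2 hc
            rw [← hproj2]
            exact hby
        have hanti' := antisym_transfer' hgbij' hopt' hford' (memAntisym hins)
        have hx' : insert ((some a : Option (enc P₁).E), e'.2) x ∈ (lcsPar (enc P₁) (enc Q)).C :=
          memAux (encDCP P₁) (encDCP Q) hpre' hanti' subset_rfl (fun r s hrs _ => hrs.1)
        refine ⟨((some a : Option (enc P₁).E), e'.2),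
          insert (((some a : Option (enc P₁).E), e'.2), e') g,
          hex, hx', ⟨hx', hins, f', ?_, hgbij', hopt'⟩, ?_⟩
        · exact (congrArg₂ (fun u v => R u v f') hpx1 hpy1).mpr hf'
        · exact (restr_insert (fun p hp => (hbij.1 p hp).1) hex).symm
    · -- backward, left to right
      intro e he hdel
      obtain ⟨q, hq, -⟩ := hbij.2.1 e he
      have hqy : q ∈ y := (hbij.1 _ hq).2
      have hdc : ∀ r s, prodLe (enc P₂) (enc Q) y r s → s ∈ y \ {q} → r ∈ y \ {q} := by
        intro r s hrs hs
        refine ⟨hrs.1, ?_⟩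
        intro hrq
        replace hrq : r = q := hrq
        subst hrq
        obtain ⟨ps, hps, -⟩ := hbij.2.2 s hs.1
        have hstep := (step_transfer hbij hopt hford hq hps).mpr hrs
        have hneq : ps ≠ e := by
          rintro rfl
          obtain ⟨w, -, huniq⟩ := hbij.2.1 ps (hbij.1 _ hps).1
          exact hs.2 (Set.mem_singleton_iff.mpr ((huniq s hps).trans (huniq r hq).symm))
        exact max_of_diff hx he hdel (hbij.1 _ hps).1 hneq hstep
      have hy' : y \ {q} ∈ (lcsPar (enc P₂) (enc Q)).C :=
        memAux (encDCP P₂) (encDCP Q) hy.1 (memAntisym hy) Set.diff_subset hdc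
      have hgbij'' : IsBij (restrMap g (x \ {e})) (x \ {e}) (y \ {q}) := isBij_restr hbij hq
      rcases (hopt _ hq).1 with ⟨hn1, hn2⟩ | ⟨a, a₂, h1, h2, hfa⟩
      · refine ⟨q, hqy, hy', hdel, hy', f, ?_, hgbij'', fun p hp => hopt p hp.1⟩
        exact (congrArg₂ (fun u v => R u v f) (pproj₁_diff_none (x := x) (e := e) hn1)
          (pproj₁_diff_none (x := y) (e := q) hn2)).mpr hf
      · have hpx1 : pproj₁ (x \ {e}) = pproj₁ x \ {a} := pproj₁_diff_some h1 he hinj1x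
        have hXdel : pproj₁ x \ {a} ∈ (enc P₁).C := by rw [← hpx1]; exact hdel.1.2.1
        have haX : a ∈ pproj₁ x := mem_pproj₁ he h1
        obtain ⟨b₂, hb₂Y, hYdel, hfres⟩ := hRf.2.2.2.2.2.1 a haX hXdel
        have hbij'' := (hR.2 _ _ _ hfres).2.2.1.1
        have hb : a₂ = b₂ := delPair hIso.1 hbij'' hfa
        subst hb
        have hpy1 : pproj₁ (y \ {q}) = pproj₁ y \ {a₂} := pproj₁_diff_some h2 hqy hinj1y
        have hopt'' : ∀ p ∈ restrMap g (x \ {e}),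
            optRel (restrMap f (pproj₁ x \ {a})) p.1.1 p.2.1 ∧ p.1.2 = p.2.2 := by
          rintro p ⟨hp, hpx⟩
          refine ⟨?_, (hopt p hp).2⟩
          rcases (hopt p hp).1 with hn | ⟨c, d, hc1, hc2, hcd⟩
          · exact Or.inl hn
          · refine Or.inr ⟨c, d, hc1, hc2, hcd, mem_pproj₁ hpx.1 hc1, ?_⟩
            intro hca
            rw [Set.mem_singleton_iff] at hca
            subst hca
            exact hpx.2 (Set.mem_singleton_iff.mpr (hinj1x p.1 hpx.1 e he c hc1 h1))
        refine ⟨q, hqy, hy', hdel, hy', restrMap f (pproj₁ x \ {a}), ?_, hgbij'', hopt''⟩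
        exact (congrArg₂ (fun u v => R u v (restrMap f (pproj₁ x \ {a}))) hpx1 hpy1).mpr hfres
    · -- backward, right to left
      intro e' he' hdel
      obtain ⟨p, hp, -⟩ := hbij.2.2 e' he'
      have hpx : p ∈ x := (hbij.1 _ hp).1
      have hdc : ∀ r s, prodLe (enc P₁) (enc Q) x r s → s ∈ x \ {p} → r ∈ x \ {p} := by
        intro r s hrs hs
        refine ⟨hrs.1, ?_⟩
        intro hrp
        replace hrp : r = p := hrp
        subst hrp
        obtain ⟨qs, hqs, -⟩ := hbij.2.1 s hs.1
        have hstep := (step_transfer hbij hopt hford hp hqs).mp hrs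
        have hneq : qs ≠ e' := by
          rintro rfl
          obtain ⟨w, -, huniq⟩ := hbij.2.2 qs (hbij.1 _ hqs).2
          exact hs.2 (Set.mem_singleton_iff.mpr ((huniq s hqs).trans (huniq r hp).symm))
        exact max_of_diff hy he' hdel (hbij.1 _ hqs).2 hneq hstep
      have hx' : x \ {p} ∈ (lcsPar (enc P₁) (enc Q)).C :=
        memAux (encDCP P₁) (encDCP Q) hx.1 (memAntisym hx) Set.diff_subset hdc
      have hgbij'' : IsBij (restrMap g (x \ {p})) (x \ {p}) (y \ {e'}) := isBij_restr hbij hp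
      rcases (hopt _ hp).1 with ⟨hn1, hn2⟩ | ⟨a, a₂, h1, h2, hfa⟩
      · refine ⟨p, hpx, hx', hx', hdel, f, ?_, hgbij'', fun r hr => hopt r hr.1⟩
        exact (congrArg₂ (fun u v => R u v f) (pproj₁_diff_none (x := x) (e := p) hn1)
          (pproj₁_diff_none (x := y) (e := e') hn2)).mpr hf
      · have hpy1 : pproj₁ (y \ {e'}) = pproj₁ y \ {a₂} := pproj₁_diff_some h2 he' hinj1y
        have hYdel : pproj₁ y \ {a₂} ∈ (enc P₂).C := by rw [← hpy1]; exact hdel.1.2.1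
        have ha₂Y : a₂ ∈ pproj₁ y := mem_pproj₁ he' h2
        obtain ⟨a', ha'X, hXdel, hfres⟩ := hRf.2.2.2.2.2.2 a₂ ha₂Y hYdel
        have hbij'' := (hR.2 _ _ _ hfres).2.2.1.1
        have hb : a = a' := delPair' hIso.1 hbij'' hfa
        subst hb
        have hpx1 : pproj₁ (x \ {p}) = pproj₁ x \ {a} := pproj₁_diff_some h1 hpx hinj1x
        have hopt'' : ∀ r ∈ restrMap g (x \ {p}),
            optRel (restrMap f (pproj₁ x \ {a})) r.1.1 r.2.1 ∧ r.1.2 = r.2.2 := by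
          rintro r ⟨hr, hrx⟩
          refine ⟨?_, (hopt r hr).2⟩
          rcases (hopt r hr).1 with hn | ⟨c, d, hc1, hc2, hcd⟩
          · exact Or.inl hn
          · refine Or.inr ⟨c, d, hc1, hc2, hcd, mem_pproj₁ hrx.1 hc1, ?_⟩
            intro hca
            rw [Set.mem_singleton_iff] at hca
            subst hca
            exact hrx.2 (Set.mem_singleton_iff.mpr (hinj1x r.1 hrx.1 p hpx c hc1 h1))
        refine ⟨p, hpx, hx', hx', hdel, restrMap f (pproj₁ x \ {a}), ?_, hgbij'', hopt''⟩
        exact (congrArg₂ (fun u v => R u v (restrMap f (pproj₁ x \ {a}))) hpx1 hpy1).mpr hfres
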